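/- Suppose additionally that 4γ + ‖W‖₁ < 1, where ‖W‖₁ = maxⱼ Σᵢ |w_ij|. Then the opinion-update map Ψ has a unique fixed point x* ∈ ℝⁿ, and for every initial vector x(0) ∈ ℝⁿ the iterates defined by x(k+1) = Ψ(x(k)) converge to x* as k → ∞. (Theorem 1, convergence part.) -/

import Mathlib

theorem stmt_1
    (n : ℕ) (hn : 1 ≤ n)
    (W : Matrix (Fin n) (Fin n) ℝ) (hW : ∀ i j, 0 ≤ W i j)
    (s : Fin n → ℝ) (hs : ∀ i, s i ∈ Set.Icc (0:ℝ) 1)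
    (g h : ℝ) (hg : g ∈ Set.Icc (0:ℝ) 1) (hh : h ∈ Set.Icc (0:ℝ) 1)
    (β γ : ℝ) (hγ0 : 0 ≤ γ) (hγβ : γ ≤ β)
    (Ψ : (Fin n → ℝ) → (Fin n → ℝ))
    (hΨ : ∀ x : Fin n → ℝ, ∀ i,
      Ψ x i = (1 - (∑ j, W i j) - 2*β + γ*(|x i - h| + |x i - g|)) * s i
        + (∑ j, W i j * x j) + (β - γ*|x i - h|)*h + (β - γ*|x i - g|)*g)
    (Wnorm : ℝ)
    (hWnorm : Wnorm = Finset.univ.sup' (Finset.univ_nonempty_iff.mpr (Fin.pos_iff_nonempty.mp hn)) (fun j => ∑ i, |W i j|))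
    (hcontr : 4*γ + Wnorm < 1) :
    ∃ xstar : Fin n → ℝ, Ψ xstar = xstar ∧
      (∀ y : Fin n → ℝ, Ψ y = y → y = xstar) ∧
      (∀ x0 : Fin n → ℝ,
        Filter.Tendsto (fun k => Ψ^[k] x0) Filter.atTop (nhds xstar)) := by
  have hWnorm0 : 0 ≤ Wnorm := by
    rw [hWnorm]
    have h1 : (0:ℝ) ≤ ∑ i, |W i ⟨0, hn⟩| :=
      Finset.sum_nonneg fun i _ => abs_nonneg _
    exact h1.trans (Finset.le_sup' (fun j => ∑ i, |W i j|) (Finset.mem_univ ⟨0, hn⟩))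
  have hK0 : 0 ≤ 4*γ + Wnorm := by positivity
  have hcol : ∀ j, (∑ i, W i j) ≤ Wnorm := by
    intro j
    rw [hWnorm]
    calc (∑ i, W i j) = ∑ i, |W i j| :=
          Finset.sum_congr rfl fun i _ => (abs_of_nonneg (hW i j)).symm
      _ ≤ _ := Finset.le_sup' (fun j => ∑ i, |W i j|) (Finset.mem_univ j)
  set E := PiLp 1 (fun _ : Fin n => ℝ) with hE
  let f : E → E := fun x => WithLp.toLp 1 (Ψ (WithLp.ofLp x))
  have key : ∀ x y : E, dist (f x) (f y) ≤ (4*γ + Wnorm) * dist x y := by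
    intro x y
    rw [PiLp.dist_eq_sum (by norm_num), PiLp.dist_eq_sum (by norm_num)]
    simp only [ENNReal.toReal_one, Real.rpow_one, one_div_one, Real.dist_eq, f]
    have hpt : ∀ i, |Ψ x i - Ψ y i| ≤
        4*γ*|x i - y i| + ∑ j, W i j * |x j - y j| := by
      intro i
      have hsi := hs i
      have e1 : |(|x i - h| - |y i - h|)| ≤ |x i - y i| := by
        refine le_trans (abs_abs_sub_abs_le_abs_sub _ _) ?_
        have : x i - h - (y i - h) = x i - y i := by ring
        rw [this]
      have e2 : |(|x i - g| - |y i - g|)| ≤ |x i - y i| := by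
        refine le_trans (abs_abs_sub_abs_le_abs_sub _ _) ?_
        have : x i - g - (y i - g) = x i - y i := by ring
        rw [this]
      have hsplit : (∑ j, W i j * (x j - y j)) =
          (∑ j, W i j * x j) - ∑ j, W i j * y j := by
        rw [← Finset.sum_sub_distrib]
        exact Finset.sum_congr rfl fun j _ => by ring
      have hdiff : Ψ x i - Ψ y i =
          γ*(|x i - h| - |y i - h|) * s i + γ*(|x i - g| - |y i - g|) * s i
          + (∑ j, W i j * (x j - y j))
          - γ*(|x i - h| - |y i - h|)*h - γ*(|x i - g| - |y i - g|)*g := by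
        rw [hΨ x i, hΨ y i, hsplit]; ring
      rw [hdiff]
      have habs : ∀ (t c : ℝ), 0 ≤ c → c ≤ 1 → |t| ≤ |x i - y i| →
          |γ * t * c| ≤ γ * |x i - y i| := by
        intro t c hc0 hc1 ht
        rw [abs_mul, abs_mul, abs_of_nonneg hγ0, abs_of_nonneg hc0]
        calc γ * |t| * c ≤ γ * |x i - y i| * 1 := by
              apply mul_le_mul (mul_le_mul_of_nonneg_left ht hγ0) hc1 hc0
              positivity
          _ = γ * |x i - y i| := by ring
      have hsum : |∑ j, W i j * (x j - y j)| ≤ ∑ j, W i j * |x j - y j| := by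
        refine le_trans (Finset.abs_sum_le_sum_abs _ _) ?_
        refine Finset.sum_le_sum fun j _ => ?_
        rw [abs_mul, abs_of_nonneg (hW i j)]
      calc |γ*(|x i - h| - |y i - h|) * s i + γ*(|x i - g| - |y i - g|) * s i
          + (∑ j, W i j * (x j - y j))
          - γ*(|x i - h| - |y i - h|)*h - γ*(|x i - g| - |y i - g|)*g|
          ≤ |γ*(|x i - h| - |y i - h|) * s i| + |γ*(|x i - g| - |y i - g|) * s i|
            + |∑ j, W i j * (x j - y j)|
            + |γ*(|x i - h| - |y i - h|)*h| + |γ*(|x i - g| - |y i - g|)*g| :=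
            le_trans (abs_sub _ _)
              (add_le_add
                (le_trans (abs_sub _ _)
                  (add_le_add (abs_add_three _ _ _) le_rfl)) le_rfl)
        _ ≤ γ*|x i - y i| + γ*|x i - y i| + (∑ j, W i j * |x j - y j|)
            + γ*|x i - y i| + γ*|x i - y i| :=
            add_le_add
              (add_le_add
                (add_le_add
                  (add_le_add (habs _ _ hsi.1 hsi.2 e1) (habs _ _ hsi.1 hsi.2 e2))
                  hsum)
                (habs _ _ hh.1 hh.2 e1))
              (habs _ _ hg.1 hg.2 e2)
        _ = 4*γ*|x i - y i| + ∑ j, W i j * |x j - y j| := by ring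
    calc (∑ i, |Ψ x i - Ψ y i|)
        ≤ ∑ i, (4*γ*|x i - y i| + ∑ j, W i j * |x j - y j|) :=
          Finset.sum_le_sum fun i _ => hpt i
      _ = 4*γ*(∑ i, |x i - y i|) + ∑ j, (∑ i, W i j) * |x j - y j| := by
          rw [Finset.sum_add_distrib, ← Finset.mul_sum, Finset.sum_comm]
          simp [Finset.sum_mul]
      _ ≤ 4*γ*(∑ i, |x i - y i|) + ∑ j, Wnorm * |x j - y j| :=
          add_le_add_right
            (Finset.sum_le_sum fun j _ =>
              mul_le_mul_of_nonneg_right (hcol j) (abs_nonneg _)) _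
      _ = (4*γ + Wnorm) * ∑ i, |x i - y i| := by
          rw [← Finset.mul_sum]; ring
  have hlip : LipschitzWith ⟨4*γ + Wnorm, hK0⟩ f :=
    LipschitzWith.of_dist_le_mul key
  have hC : ContractingWith ⟨4*γ + Wnorm, hK0⟩ f := ⟨by exact_mod_cast hcontr, hlip⟩
  have hne : Nonempty E := ⟨WithLp.toLp 1 (fun _ => 0)⟩
  refine ⟨WithLp.ofLp (ContractingWith.fixedPoint (α := E) f hC),
    congrArg WithLp.ofLp (hC.fixedPoint_isFixedPt (f := f)), ?_, ?_⟩
  · intro y hy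
    have hy' : f (WithLp.toLp 1 y) = WithLp.toLp 1 y := by
      show WithLp.toLp 1 (Ψ y) = _
      rw [hy]
    exact congrArg WithLp.ofLp (hC.fixedPoint_unique hy')
  · intro x0
    have hit : ∀ k (z : E), WithLp.ofLp (f^[k] z) = Ψ^[k] (WithLp.ofLp z) := by
      intro k
      induction k with
      | zero => intro z; rfl
      | succ k ih =>
        intro z
        rw [Function.iterate_succ_apply', Function.iterate_succ_apply', ← ih]
    have := ((PiLp.continuous_ofLp 1 _).tendsto _).comp
      (hC.tendsto_iterate_fixedPoint (WithLp.toLp 1 x0))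
    refine this.congr fun k => ?_
    simp only [Function.comp_apply, hit]
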